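/- Let π = (π₀, π₁) be an irreducible pair of bijections from a finite alphabet A (with d ≥ 2 elements) to {1,...,d}, and let Ω_π be the antisymmetric matrix with entries Ω_{αβ} = 1 if π₁(α) > π₁(β) and π₀(α) < π₀(β), Ω_{αβ} = -1 if π₁(α) < π₁(β) and π₀(α) > π₀(β), and 0 otherwise. Then the intersection of the strictly positive cone ℝ₊^A with the kernel of Ω_π is empty, i.e., no strictly positive vector λ satisfies Ω_π λ = 0. -/

import Mathlib

/-- For an irreducible combinatorial pair on an alphabet of `d ≥ 2`
letters, no strictly positive vector lies in the kernel of the Rauzy–Veech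
antisymmetric matrix `Ω_π`. -/
theorem stmt0 {d : ℕ} (hd : 2 ≤ d) (π₀ π₁ : Fin d ≃ Fin d)
    (hirr : ∀ s : ℕ, 1 ≤ s → s ≤ d - 1 →
      ¬ (∀ α : Fin d, ((π₀ α : ℕ) < s ↔ (π₁ α : ℕ) < s)))
    (Ω : Matrix (Fin d) (Fin d) ℝ)
    (hΩ : ∀ α β : Fin d, Ω α β =
      if π₁ β < π₁ α ∧ π₀ α < π₀ β then (1 : ℝ)
      else if π₁ α < π₁ β ∧ π₀ β < π₀ α then (-1 : ℝ) else 0)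
    (lam : Fin d → ℝ) (hpos : ∀ α, 0 < lam α) :
    Ω.mulVec lam ≠ 0 := by
  intro hzero
  have key : ∀ α β, Ω α β =
      (if π₁ β < π₁ α then (1:ℝ) else 0) - (if π₀ β < π₀ α then (1:ℝ) else 0) := by
    intro α β
    rw [hΩ]
    by_cases h1 : π₁ β < π₁ α <;> by_cases h0 : π₀ β < π₀ α
    · simp [h1, h0, h0.asymm, h1.asymm]
    · have hne : α ≠ β := fun h => by subst h; exact lt_irrefl _ h1
      have hlt : π₀ α < π₀ β :=
        lt_of_le_of_ne (not_lt.1 h0) (fun h => hne (π₀.injective h))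
      simp [h1, h0, hlt]
    · have hne : α ≠ β := fun h => by subst h; exact lt_irrefl _ h0
      have hlt : π₁ α < π₁ β :=
        lt_of_le_of_ne (not_lt.1 h1) (fun h => hne (π₁.injective h))
      simp [h1, h0, hlt]
    · simp [h1, h0]
  have hS : ∀ α : Fin d,
      ∑ β ∈ Finset.univ.filter (fun β => π₁ β < π₁ α), lam β =
      ∑ β ∈ Finset.univ.filter (fun β => π₀ β < π₀ α), lam β := by
    intro α
    have h := congrFun hzero α
    simp only [Matrix.mulVec, dotProduct, key, Pi.zero_apply, sub_mul,
      ite_mul, one_mul, zero_mul, Finset.sum_sub_distrib] at h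
    rw [Finset.sum_filter, Finset.sum_filter]
    linarith
  have hmono : ∀ α β, π₀ α < π₀ β → π₁ α < π₁ β := by
    intro α β h
    by_contra hc
    push_neg at hc
    have h0lt : ∑ γ ∈ Finset.univ.filter (fun γ => π₀ γ < π₀ α), lam γ <
        ∑ γ ∈ Finset.univ.filter (fun γ => π₀ γ < π₀ β), lam γ := by
      apply Finset.sum_lt_sum_of_subset (i := α)
      · intro γ hγ
        simp only [Finset.mem_filter] at *
        exact ⟨hγ.1, hγ.2.trans h⟩
      · simp [h]
      · simp
      · exact hpos α
      · exact fun j _ _ => (hpos j).le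
    have h1le : ∑ γ ∈ Finset.univ.filter (fun γ => π₁ γ < π₁ β), lam γ ≤
        ∑ γ ∈ Finset.univ.filter (fun γ => π₁ γ < π₁ α), lam γ := by
      apply Finset.sum_le_sum_of_subset_of_nonneg
      · intro γ hγ
        simp only [Finset.mem_filter] at *
        exact ⟨hγ.1, hγ.2.trans_le hc⟩
      · exact fun j _ _ => (hpos j).le
    have := hS α
    have := hS β
    linarith
  -- the two minimal letters coincide
  have hz : (0:ℕ) < d := by omega
  set z : Fin d := ⟨0, hz⟩ with hzdef
  have hab : π₀.symm z = π₁.symm z := by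
    by_contra hne
    have hneq : π₀ (π₁.symm z) ≠ z := by
      intro h
      exact hne ((Equiv.eq_symm_apply π₀).2 h).symm
    have h0 : π₀ (π₀.symm z) < π₀ (π₁.symm z) := by
      rw [Equiv.apply_symm_apply, Fin.lt_def]
      have h2 : (π₀ (π₁.symm z)).val ≠ 0 := fun h => hneq (Fin.ext (by rw [h, hzdef]))
      show (0:ℕ) < (π₀ (π₁.symm z)).val
      omega
    have hm := hmono _ _ h0
    rw [Equiv.apply_symm_apply, Fin.lt_def] at hm
    simp [hzdef] at hm
  apply hirr 1 le_rfl (by omega)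
  intro α
  have h0 : ((π₀ α : ℕ) < 1) ↔ α = π₀.symm z := by
    constructor
    · intro h
      have : π₀ α = z := by
        apply Fin.ext; simpa using Nat.lt_one_iff.1 h
      exact (Equiv.eq_symm_apply π₀).2 this
    · intro h
      subst h
      simp [Equiv.apply_symm_apply, hzdef]
  have h1 : ((π₁ α : ℕ) < 1) ↔ α = π₁.symm z := by
    constructor
    · intro h
      have : π₁ α = z := by
        apply Fin.ext; simpa using Nat.lt_one_iff.1 h
      exact (Equiv.eq_symm_apply π₁).2 this
    · intro h
      subst h
      simp [Equiv.apply_symm_apply, hzdef]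
  rw [h0, h1, hab]
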